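/- arXiv:2104.05140 — 8 statements merged into one kernel-verified Lean document; each statement's English description precedes it below -/
import Mathlib

section
/- Let R be a G-graded commutative ring and P a proper graded ideal. Then P is a graded φ_ω-r-ideal (with φ_ω(P) = ⋂_{n=1}^∞ Pⁿ) if and only if P is a graded n-almost r-ideal (with φ_n(P) = Pⁿ) for every n ≥ 2. -/
/-- An element is regular if its annihilator is zero. -/
def IsReg {R : Type*} [CommRing R] (x : R) : Prop := ∀ r : R, r * x = 0 → r = 0

/-- `P` is a graded `φ`-`r`-ideal of `R` (with `φP` denoting the value `φ(P)`). -/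
def IsGradedPhiRIdeal {G R : Type*} [AddGroup G] [DecidableEq G] [CommRing R]
    (𝒜 : G → AddSubgroup R) [GradedRing 𝒜] (P : Ideal R) (φP : Set R) : Prop :=
  P.IsHomogeneous 𝒜 ∧ P ≠ ⊤ ∧
    ∀ x y : R, SetLike.IsHomogeneousElem 𝒜 x → SetLike.IsHomogeneousElem 𝒜 y →
      x * y ∈ P → x * y ∉ φP → IsReg x → y ∈ P

/-- `P` is a graded `r`-ideal of `R`. -/
def IsGradedRIdeal {G R : Type*} [AddGroup G] [DecidableEq G] [CommRing R]
    (𝒜 : G → AddSubgroup R) [GradedRing 𝒜] (P : Ideal R) : Prop :=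
  P.IsHomogeneous 𝒜 ∧ P ≠ ⊤ ∧
    ∀ x y : R, SetLike.IsHomogeneousElem 𝒜 x → SetLike.IsHomogeneousElem 𝒜 y →
      x * y ∈ P → IsReg x → y ∈ P

theorem stmt1 {G R : Type*} [AddGroup G] [DecidableEq G] [CommRing R] [Nontrivial R]
    (𝒜 : G → AddSubgroup R) [GradedRing 𝒜]
    (P : Ideal R) (hhom : P.IsHomogeneous 𝒜) (hproper : P ≠ ⊤) :
    IsGradedPhiRIdeal 𝒜 P {x : R | ∀ n : ℕ, 1 ≤ n → x ∈ P ^ n} ↔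
      ∀ n : ℕ, 2 ≤ n → IsGradedPhiRIdeal 𝒜 P ((P ^ n : Ideal R) : Set R) := by
  constructor
  · rintro ⟨-, -, h⟩ n hn
    refine ⟨hhom, hproper, fun x y hx hy hxy hnin hreg => ?_⟩
    exact h x y hx hy hxy (fun hall => hnin (hall n (by omega))) hreg
  · intro h
    refine ⟨hhom, hproper, fun x y hx hy hxy hnin hreg => ?_⟩
    simp only [Set.mem_setOf_eq, not_forall, exists_prop] at hnin
    obtain ⟨n, hn1, hnP⟩ := hnin
    rcases eq_or_lt_of_le hn1 with h1 | h2
    · exact absurd hxy (by simpa [← h1] using hnP)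
    · exact (h n h2).2.2 x y hx hy hxy hnP hreg
end

section
/- Let R be a G-graded commutative ring and P a proper graded ideal with φ(P) ⊆ P a graded ideal. If P/φ(P) is a graded r-ideal of R/φ(P) and φ(P) is a graded r-ideal of R, then P is a graded φ-r-ideal of R. -/
theorem stmt4 {G R : Type*} [AddGroup G] [DecidableEq G] [CommRing R] [Nontrivial R]
    (𝒜 : G → AddSubgroup R) [GradedRing 𝒜]
    (P Q : Ideal R) (hQP : Q ≤ P)
    (hPhom : P.IsHomogeneous 𝒜) (hPproper : P ≠ ⊤)
    (hQr : IsGradedRIdeal 𝒜 Q)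
    (hquot : Ideal.map (Ideal.Quotient.mk Q) P ≠ ⊤ ∧
      ∀ x y : R ⧸ Q,
        (∃ a : R, SetLike.IsHomogeneousElem 𝒜 a ∧ Ideal.Quotient.mk Q a = x) →
        (∃ b : R, SetLike.IsHomogeneousElem 𝒜 b ∧ Ideal.Quotient.mk Q b = y) →
        x * y ∈ Ideal.map (Ideal.Quotient.mk Q) P →
        (∀ r : R ⧸ Q, r * x = 0 → r = 0) →
        y ∈ Ideal.map (Ideal.Quotient.mk Q) P) :
    IsGradedPhiRIdeal 𝒜 P (Q : Set R) := by
  refine ⟨hPhom, hPproper, fun x y hx hy hxyP _hxyQ hreg => ?_⟩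
  obtain ⟨g, hxg⟩ := hx
  -- mk x is regular in R ⧸ Q
  have hmkreg : ∀ r : R ⧸ Q, r * Ideal.Quotient.mk Q x = 0 → r = 0 := by
    intro r hr
    obtain ⟨s, rfl⟩ := Ideal.Quotient.mk_surjective r
    rw [← map_mul, Ideal.Quotient.eq_zero_iff_mem] at hr
    rw [Ideal.Quotient.eq_zero_iff_mem]
    -- each homogeneous component of s lies in Q
    have hcomp : ∀ i : G, (DirectSum.decompose 𝒜 s i : R) ∈ Q := by
      intro i
      have h1 : (DirectSum.decompose 𝒜 (s * x) (i + g) : R) ∈ Q := hQr.1 _ hr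
      rw [DirectSum.coe_decompose_mul_add_of_right_mem 𝒜 hxg] at h1
      have := hQr.2.2 x (DirectSum.decompose 𝒜 s i) ⟨g, hxg⟩
        ⟨i, SetLike.coe_mem _⟩ (by rwa [mul_comm]) hreg
      exact this
    classical
    rw [← DirectSum.sum_support_decompose 𝒜 s]
    exact Ideal.sum_mem _ fun i _ => hcomp i
  have hmem : Ideal.Quotient.mk Q y ∈ Ideal.map (Ideal.Quotient.mk Q) P := by
    refine hquot.2 _ _ ⟨x, ⟨g, hxg⟩, rfl⟩ ⟨y, hy, rfl⟩ ?_ hmkreg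
    rw [← map_mul]
    exact Ideal.mem_map_of_mem _ hxyP
  have : y ∈ Ideal.comap (Ideal.Quotient.mk Q) (Ideal.map (Ideal.Quotient.mk Q) P) := hmem
  rwa [Ideal.comap_map_of_surjective _ Ideal.Quotient.mk_surjective,
    ← RingHom.ker_eq_comap_bot, Ideal.mk_ker, sup_eq_left.mpr hQP] at this
end

section
/- Let R be a G-graded commutative ring, P a proper graded ideal, a ∈ h(R) \ P, and suppose (φ(P) : a) ⊆ φ((P : a)). If P is a graded φ-r-ideal of R, then (P : a) is a graded φ-r-ideal of R. -/
theorem stmt11 {G R : Type*} [AddGroup G] [DecidableEq G] [CommRing R] [Nontrivial R]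
    (𝒜 : G → AddSubgroup R) [GradedRing 𝒜]
    (P : Ideal R) (φ : Ideal R → Set R)
    (a : R) (ha : SetLike.IsHomogeneousElem 𝒜 a) (haP : a ∉ P)
    (hcolon : {b : R | a * b ∈ φ P} ⊆ φ (P.colon (Ideal.span {a})))
    (hP : IsGradedPhiRIdeal 𝒜 P (φ P)) :
    IsGradedPhiRIdeal 𝒜 (P.colon (Ideal.span {a})) (φ (P.colon (Ideal.span {a}))) := by
  obtain ⟨hhom, hproper, hmain⟩ := hP
  obtain ⟨j, haj⟩ := ha
  refine ⟨?_, ?_, ?_⟩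
  · intro i r hr
    rw [Ideal.mem_colon_span_singleton] at hr ⊢
    have h1 : a * r ∈ P := by rwa [mul_comm]
    have h2 := hhom (j + i) h1
    rw [DirectSum.coe_decompose_mul_add_of_left_mem 𝒜 haj] at h2
    rwa [mul_comm]
  · intro h
    apply haP
    have : (1 : R) ∈ P.colon (Ideal.span {a}) := h ▸ Submodule.mem_top
    rw [Ideal.mem_colon_span_singleton, one_mul] at this
    exact this
  · intro x y hx hy hxy hnφ hreg
    rw [Ideal.mem_colon_span_singleton] at hxy
    by_cases hφ : x * (y * a) ∈ φ P
    · exact absurd (hcolon (by simpa [mul_comm, mul_left_comm] using hφ)) hnφ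
    · rw [Ideal.mem_colon_span_singleton, mul_comm]
      exact hmain x (a * y) hx (SetLike.IsHomogeneousElem.mul ⟨j, haj⟩ hy)
        (by rw [mul_comm a y, ← mul_assoc]; exact hxy) (by rw [mul_comm a y, ← mul_assoc, mul_assoc]; exact hφ) hreg
end

section
/- Let R be a G-graded commutative ring, P a graded φ-r-ideal of R with φ(P) ⊆ P a graded r-ideal of R. Let I and J be graded ideals of R with IJ ⊆ P, IJ ⊄ φ(P), Ann(I) = {0}, and suppose Ann(I) = Ann(c) for some homogeneous c ∈ I. Then J ⊆ P. -/
theorem stmt13 {G R : Type*} [AddGroup G] [DecidableEq G] [CommRing R] [Nontrivial R]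
    (𝒜 : G → AddSubgroup R) [GradedRing 𝒜]
    (P Q : Ideal R) (hQP : Q ≤ P) (hQr : IsGradedRIdeal 𝒜 Q)
    (hP : IsGradedPhiRIdeal 𝒜 P (Q : Set R))
    (I J : Ideal R) (hI : I.IsHomogeneous 𝒜) (hJ : J.IsHomogeneous 𝒜)
    (hIJ : I * J ≤ P) (hIJphi : ¬ ((I * J : Ideal R) : Set R) ⊆ (Q : Set R))
    (hAnnI : ∀ r : R, (∀ i ∈ I, r * i = 0) → r = 0)
    (c : R) (hc : c ∈ I) (hchom : SetLike.IsHomogeneousElem 𝒜 c)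
    (hAnn : ∀ r : R, (∀ i ∈ I, r * i = 0) ↔ r * c = 0) :
    J ≤ P := by
  have hreg : IsReg c := fun r hr => hAnnI r ((hAnn r).mpr hr)
  have key : ∀ y : R, SetLike.IsHomogeneousElem 𝒜 y → y ∈ J → y ∈ P := by
    intro y hy hyJ
    have hcy : c * y ∈ P := hIJ (Ideal.mul_mem_mul hc hyJ)
    by_cases hq : c * y ∈ Q
    · exact hQP (hQr.2.2 c y hchom hy hq hreg)
    · exact hP.2.2 c y hchom hy hcy hq hreg
  intro y hyJ
  classical
  rw [← DirectSum.sum_support_decompose 𝒜 y]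
  exact Ideal.sum_mem _ fun i _ =>
    key _ ⟨i, (DirectSum.decompose 𝒜 y i).2⟩ (hJ i hyJ)
end

section
/- Let R be a G-graded commutative ring and P a graded r-ideal of R contained in a graded ideal I of R. If I/P is a graded r-ideal of R/P, then I is a graded φ-r-ideal of R for any function φ on graded ideals with φ(I) ⊆ I. -/
theorem stmt15 {G R : Type*} [AddGroup G] [DecidableEq G] [CommRing R] [Nontrivial R]
    (𝒜 : G → AddSubgroup R) [GradedRing 𝒜]
    (P I : Ideal R) (hPr : IsGradedRIdeal 𝒜 P) (hPI : P ≤ I)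
    (hIhom : I.IsHomogeneous 𝒜)
    (φI : Set R) (hsub : φI ⊆ (I : Set R))
    (hquot : Ideal.map (Ideal.Quotient.mk P) I ≠ ⊤ ∧
      ∀ x y : R ⧸ P,
        (∃ a : R, SetLike.IsHomogeneousElem 𝒜 a ∧ Ideal.Quotient.mk P a = x) →
        (∃ b : R, SetLike.IsHomogeneousElem 𝒜 b ∧ Ideal.Quotient.mk P b = y) →
        x * y ∈ Ideal.map (Ideal.Quotient.mk P) I →
        (∀ r : R ⧸ P, r * x = 0 → r = 0) →
        y ∈ Ideal.map (Ideal.Quotient.mk P) I) :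
    IsGradedPhiRIdeal 𝒜 I φI := by
  obtain ⟨hPhom, hPne, hP⟩ := hPr
  refine ⟨hIhom, ?_, ?_⟩
  · rintro rfl
    exact hquot.1 (by simp [Ideal.map_top])
  · intro x y hx hy hxy _ hreg
    classical
    -- mk x is regular in R ⧸ P
    have hregq : ∀ r : R ⧸ P, r * Ideal.Quotient.mk P x = 0 → r = 0 := by
      intro r hr
      obtain ⟨r', rfl⟩ := Ideal.Quotient.mk_surjective r
      have hrx : r' * x ∈ P := by
        rwa [← map_mul, Ideal.Quotient.eq_zero_iff_mem] at hr
      have hr'P : r' ∈ P := by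
        obtain ⟨g, hxg⟩ := hx
        have : ∀ i, (DirectSum.decompose 𝒜 r' i : R) ∈ P := by
          intro i
          have h1 : (DirectSum.decompose 𝒜 (r' * x) (i + g) : R)
              = (DirectSum.decompose 𝒜 r' i : R) * x :=
            DirectSum.coe_decompose_mul_add_of_right_mem 𝒜 hxg
          have h2 : (DirectSum.decompose 𝒜 (r' * x) (i + g) : R) ∈ P := hPhom _ hrx
          rw [h1] at h2
          exact hP x _ ⟨g, hxg⟩ ⟨i, SetLike.coe_mem _⟩ (by rwa [mul_comm]) hreg
        have hsum := DirectSum.sum_support_decompose 𝒜 r'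
        rw [← hsum]
        exact Ideal.sum_mem P fun i _ => this i
      rw [Ideal.Quotient.eq_zero_iff_mem]
      exact hr'P
    have hmem : Ideal.Quotient.mk P y ∈ Ideal.map (Ideal.Quotient.mk P) I := by
      refine hquot.2 _ _ ⟨x, hx, rfl⟩ ⟨y, hy, rfl⟩ ?_ hregq
      rw [← map_mul]
      exact Ideal.mem_map_of_mem _ hxy
    obtain ⟨z, hz, hzy⟩ :=
      (Ideal.mem_map_iff_of_surjective _ Ideal.Quotient.mk_surjective).mp hmem
    have : y - z ∈ P := by
      rw [← Ideal.Quotient.eq_zero_iff_mem, map_sub, hzy, sub_self]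
    have : y - z ∈ I := hPI this
    simpa using I.add_mem this hz
end

section
/- Let R be a G-graded commutative ring and P a proper graded ideal with φ(P) ⊆ P. Then P is a graded φ-pure ideal of R if and only if for every nonzero x ∈ (P ∩ h(R)) \ φ(P), there exists y ∈ P_e = P ∩ R_e such that x = xy. -/
theorem stmt16 {G R : Type*} [AddGroup G] [DecidableEq G] [CommRing R] [Nontrivial R]
    (𝒜 : G → AddSubgroup R) [GradedRing 𝒜]
    (P : Ideal R) (hhom : P.IsHomogeneous 𝒜) (hproper : P ≠ ⊤)
    (φP : Set R) (hsub : φP ⊆ (P : Set R)) :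
    (∀ x : R, x ∈ P → SetLike.IsHomogeneousElem 𝒜 x → x ∉ φP →
        ∃ y : R, y ∈ P ∧ SetLike.IsHomogeneousElem 𝒜 y ∧ x = x * y) ↔
      (∀ x : R, x ≠ 0 → x ∈ P → SetLike.IsHomogeneousElem 𝒜 x → x ∉ φP →
        ∃ y : R, y ∈ P ∧ y ∈ 𝒜 (0 : G) ∧ x = x * y) := by
  constructor
  · intro h x hx0 hxP hxh hxφ
    obtain ⟨y, hyP, ⟨g, hyg⟩, hxy⟩ := h x hxP hxh hxφ
    obtain ⟨a, hxa⟩ := hxh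
    have hmul : x * y ∈ 𝒜 (a + g) := SetLike.mul_mem_graded hxa hyg
    have hx2 : x ∈ 𝒜 (a + g) := hxy ▸ hmul
    have : a = a + g := DirectSum.degree_eq_of_mem_mem 𝒜 hxa hx2 hx0
    have hg : g = 0 := by
      have := left_eq_add.mp this
      exact this
    exact ⟨y, hyP, hg ▸ hyg, hxy⟩
  · intro h x hxP hxh hxφ
    by_cases hx0 : x = 0
    · exact ⟨0, P.zero_mem, ⟨0, (𝒜 0).zero_mem⟩, by simp [hx0]⟩
    · obtain ⟨y, hyP, hy0, hxy⟩ := h x hx0 hxP hxh hxφ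
      exact ⟨y, hyP, ⟨0, hy0⟩, hxy⟩
end

section
/- Let G be an abelian group, R a G-graded commutative ring, and M a G-graded R-module with Zd(R) = Zd(M), where Zd(M) = {a ∈ R : am = 0 for some nonzero m ∈ M}. Let φ₁ be a function on graded ideals of R and φ₂ a function on graded ideals of the idealization R(+)M with φ₂(P(+)M) = φ₁(P)(+)M for every proper graded ideal P of R. If P(+)M is a graded φ₂-r-ideal of R(+)M, then P is a graded φ₁-r-ideal of R. -/
open TrivSqZeroExt in
theorem stmt18 {G R M : Type*} [AddCommGroup G] [DecidableEq G]
    [CommRing R] [Nontrivial R] [AddCommGroup M] [Module R M]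
    [Module Rᵐᵒᵖ M] [IsCentralScalar R M]
    (𝒜 : G → AddSubgroup R) [GradedRing 𝒜]
    (ℳ : G → AddSubgroup M) [SetLike.GradedSMul 𝒜 ℳ] [DirectSum.Decomposition ℳ]
    -- Zd(R) = Zd(M)
    (hZd : ∀ a : R, (∃ b : R, b ≠ 0 ∧ a * b = 0) ↔ (∃ m : M, m ≠ 0 ∧ a • m = 0))
    (φ₁ : Ideal R → Set R)
    (φ₂ : Ideal (TrivSqZeroExt R M) → Set (TrivSqZeroExt R M))
    -- φ₂(P(+)M) = φ₁(P)(+)M for every proper graded ideal P of R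
    (hφ : ∀ P : Ideal R, P.IsHomogeneous 𝒜 → P ≠ ⊤ →
      φ₂ (Ideal.comap (fstHom R R M).toRingHom P) =
        {z : TrivSqZeroExt R M | z.fst ∈ φ₁ P})
    (P : Ideal R) (hPhom : P.IsHomogeneous 𝒜) (hPproper : P ≠ ⊤)
    -- P(+)M is a graded φ₂-r-ideal of R(+)M
    (hPM : Ideal.comap (fstHom R R M).toRingHom P ≠ ⊤ ∧
      ∀ z w : TrivSqZeroExt R M,
        (∃ g : G, z.fst ∈ 𝒜 g ∧ z.snd ∈ ℳ g) →
        (∃ g : G, w.fst ∈ 𝒜 g ∧ w.snd ∈ ℳ g) →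
        z * w ∈ Ideal.comap (fstHom R R M).toRingHom P →
        z * w ∉ φ₂ (Ideal.comap (fstHom R R M).toRingHom P) →
        (∀ u : TrivSqZeroExt R M, u * z = 0 → u = 0) →
        w ∈ Ideal.comap (fstHom R R M).toRingHom P) :
    IsGradedPhiRIdeal 𝒜 P (φ₁ P) := by
  refine ⟨hPhom, hPproper, ?_⟩
  intro x y hx hy hxy hxyφ hreg
  obtain ⟨gx, hgx⟩ := hx
  obtain ⟨gy, hgy⟩ := hy
  have key := hPM.2 (inl x) (inl y)
    ⟨gx, by simpa using hgx, by simpa using (ℳ gx).zero_mem⟩ ⟨gy, by simpa using hgy, by simpa using (ℳ gy).zero_mem⟩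
  rw [inl_mul_inl] at key
  have h1 : (inl (x * y) : TrivSqZeroExt R M) ∈ Ideal.comap (fstHom R R M).toRingHom P := by
    simpa [Ideal.mem_comap] using hxy
  have h2 : (inl (x * y) : TrivSqZeroExt R M) ∉
      φ₂ (Ideal.comap (fstHom R R M).toRingHom P) := by
    rw [hφ P hPhom hPproper]
    simpa using hxyφ
  have h3 : ∀ u : TrivSqZeroExt R M, u * inl x = 0 → u = 0 := by
    intro u hu
    have hfst : u.fst * x = 0 := by
      have := congrArg TrivSqZeroExt.fst hu
      simpa using this
    have hsnd : x • u.snd = 0 := by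
      have := congrArg TrivSqZeroExt.snd hu
      simpa [TrivSqZeroExt.snd_mul, op_smul_eq_smul] using this
    have hu1 : u.fst = 0 := hreg _ hfst
    have hu2 : u.snd = 0 := by
      by_contra hne
      obtain ⟨b, hb, hab⟩ := (hZd x).2 ⟨u.snd, hne, hsnd⟩
      exact hb (hreg b (by rw [mul_comm]; exact hab))
    exact TrivSqZeroExt.ext hu1 hu2
  have := key h1 h2 h3
  simpa [Ideal.mem_comap] using this
end

section
/- Let R be a G-graded commutative ring and S ⊆ h(R) a multiplicative set with S ⊆ r(R) = {a : Ann(a) = {0}}. If P is a graded φ-r-ideal of R with S ∩ P = ∅ and S⁻¹φ(P) ⊆ φ_S(S⁻¹P), then S⁻¹P is a graded φ_S-r-ideal of S⁻¹R, where φ_S(I) = S⁻¹φ(I ∩ R) for graded ideals I of S⁻¹R. -/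
theorem stmt19 {G R : Type*} [AddGroup G] [DecidableEq G] [CommRing R] [Nontrivial R]
    (𝒜 : G → AddSubgroup R) [GradedRing 𝒜]
    (s : Submonoid R)
    (hShom : ∀ t ∈ s, SetLike.IsHomogeneousElem 𝒜 t)
    (hSreg : ∀ t ∈ s, IsReg t)
    (P : Ideal R) (φ : Ideal R → Ideal R)
    (hP : IsGradedPhiRIdeal 𝒜 P ((φ P : Ideal R) : Set R))
    (hSP : ∀ t ∈ s, t ∉ P)
    -- S⁻¹φ(P) ⊆ φ_S(S⁻¹P), where φ_S(I) = S⁻¹φ(I ∩ R)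
    (hsub : Ideal.map (algebraMap R (Localization s)) (φ P) ≤
      Ideal.map (algebraMap R (Localization s))
        (φ (Ideal.comap (algebraMap R (Localization s))
          (Ideal.map (algebraMap R (Localization s)) P)))) :
    -- S⁻¹P is a graded φ_S-r-ideal of S⁻¹R
    Ideal.map (algebraMap R (Localization s)) P ≠ ⊤ ∧
      ∀ x y : Localization s,
        (∃ (a : R) (t : s), SetLike.IsHomogeneousElem 𝒜 a ∧ x = Localization.mk a t) →
        (∃ (b : R) (u : s), SetLike.IsHomogeneousElem 𝒜 b ∧ y = Localization.mk b u) →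
        x * y ∈ Ideal.map (algebraMap R (Localization s)) P →
        x * y ∉ (Ideal.map (algebraMap R (Localization s))
          (φ (Ideal.comap (algebraMap R (Localization s))
            (Ideal.map (algebraMap R (Localization s)) P))) : Set (Localization s)) →
        (∀ r : Localization s, r * x = 0 → r = 0) →
        y ∈ Ideal.map (algebraMap R (Localization s)) P := by
  have hle : s ≤ nonZeroDivisors R := fun t ht =>
    mem_nonZeroDivisors_iff_right.mpr (fun r hr => hSreg t ht r hr)
  have hinj : Function.Injective (algebraMap R (Localization s)) :=
    IsLocalization.injective (Localization s) hle
  constructor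
  · intro htop
    have h1 : (1 : Localization s) ∈ Ideal.map (algebraMap R (Localization s)) P := by
      rw [htop]; trivial
    obtain ⟨⟨p, t⟩, hpt⟩ := (IsLocalization.mem_map_algebraMap_iff s (Localization s)).mp h1
    rw [one_mul] at hpt
    have : (t : R) = (p : R) := hinj hpt
    exact hSP t t.2 (this ▸ p.2)
  · rintro x y ⟨a, t, ha, rfl⟩ ⟨b, u, hb, rfl⟩ hmem hnot hxreg
    have hareg : IsReg a := by
      intro r hr
      have : (Localization.mk r 1) * Localization.mk a t = 0 := by
        rw [Localization.mk_mul, hr, Localization.mk_zero]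
      have h0 : Localization.mk r 1 = 0 := hxreg _ this
      have : algebraMap R (Localization s) r = 0 := by
        rwa [← Localization.mk_one_eq_algebraMap]
      exact hinj (by simpa using this)
    have hmul : Localization.mk a t * Localization.mk b u = Localization.mk (a * b) (t * u) :=
      Localization.mk_mul a b t u
    rw [hmul, Localization.mk_eq_mk'] at hmem
    obtain ⟨w, hw, hwab⟩ := (IsLocalization.mk'_mem_map_algebraMap_iff s (Localization s)
      P (a * b) (t * u)).mp hmem
    -- apply the phi-r property to X = w * a and b
    have hXhom : SetLike.IsHomogeneousElem 𝒜 (w * a) := SetLike.IsHomogeneousElem.mul (hShom w hw) ha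
    have hXreg : IsReg (w * a) := by
      intro r hr
      have : (r * w) * a = 0 := by rw [mul_assoc]; exact hr
      have h2 : r * w = 0 := hareg _ this
      exact hSreg w hw r (by rwa [mul_comm] at h2 ⊢)
    have hXb : (w * a) * b ∈ P := by
      have : w * (a * b) = (w * a) * b := by ring
      rwa [this] at hwab
    have hXnφ : (w * a) * b ∉ ((φ P : Ideal R) : Set R) := by
      intro hφ
      apply hnot
      apply hsub
      have hmk : Localization.mk a t * Localization.mk b u =
          algebraMap R (Localization s) ((w * a) * b) *
            Localization.mk 1 (⟨w, hw⟩ * (t * u)) := by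
        rw [hmul, ← Localization.mk_one_eq_algebraMap, Localization.mk_mul,
          Localization.mk_eq_mk_iff, Localization.r_iff_exists]
        exact ⟨1, by push_cast; ring⟩
      rw [hmk]
      exact Ideal.mul_mem_right _ _ (Ideal.mem_map_of_mem _ hφ)
    have hbP : b ∈ P := hP.2.2 (w * a) b hXhom hb hXb hXnφ hXreg
    rw [Localization.mk_eq_mk']
    exact (IsLocalization.mk'_mem_map_algebraMap_iff s (Localization s) P b u).mpr
      ⟨1, one_mem s, by simpa using hbP⟩
end
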